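/- For every regular point x ∈ ℝ^{n_0}, the critical indices are stable: C(x) = C̃_s(x) for all compatible activation patterns s ∈ S^C(x). -/

import Mathlib

/-!
Formalization of the setting of "Deep ReLU Programming" (Hinz & van de Geer).

A feed-forward ReLU network with `L` hidden layers and widths `n 0, …, n (L+1)`
(`n (L+1) = 1` for a real-valued network) is encoded by the structure `Net L n`
below, where `W k : Matrix (Fin (n (k+1))) (Fin (n k)) ℝ` and
`b k : Fin (n (k+1)) → ℝ` are the weight matrix and bias vector of layer `k+1`
(so the paper's `W_l, b_l` correspond to `W (l-1), b (l-1)` here).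

A neuron `(l, j)` of the paper (layer `l ∈ {1, …, L}`, neuron `j`) is encoded as
the pair `⟨k, j⟩ : Idx n` with `k = l - 1`; membership in the index set `I`
corresponds to the condition `k < L`.
-/

noncomputable section
open Metric Filter Topology
open scoped Classical RealInnerProductSpace BigOperators

namespace DRLP

/-- Input space `ℝ^{n 0}` with the Euclidean metric and inner product. -/
abbrev Input (n : ℕ → ℕ) := EuclideanSpace ℝ (Fin (n 0))

/-- Patterns: one real number for each neuron `⟨k, j⟩` (neuron `j` of layer `k+1`). -/
abbrev Pat (n : ℕ → ℕ) := ∀ k : ℕ, Fin (n (k+1)) → ℝ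

/-- Neuron indices: `⟨k, j⟩` denotes neuron `j` of layer `k+1`. -/
abbrev Idx (n : ℕ → ℕ) := Σ k : ℕ, Fin (n (k+1))

/-- `s` is an activation pattern (element of `S = {0,1}^{n_1} × ⋯ × {0,1}^{n_L}`). -/
def IsPattern (L : ℕ) {n : ℕ → ℕ} (s : Pat n) : Prop :=
  ∀ k < L, ∀ j, s k j = 0 ∨ s k j = 1

/-- Compatibility of a (hyperplane) pattern `h` with an activation pattern `s`:
`h_{lj} (s_{lj} - 0.5) ≥ 0` for all neurons `(l,j) ∈ I`. -/
def PatCompatible (L : ℕ) {n : ℕ → ℕ} (h s : Pat n) : Prop :=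
  ∀ k < L, ∀ j, h k j * (s k j - 1/2) ≥ 0

/-- A feed-forward ReLU network with `L` hidden layers and widths `n 0, …, n (L+1)`. -/
structure Net (L : ℕ) (n : ℕ → ℕ) : Type where
  W : ∀ k : ℕ, Matrix (Fin (n (k+1))) (Fin (n k)) ℝ
  b : ∀ k : ℕ, Fin (n (k+1)) → ℝ

namespace Net

variable {L : ℕ} {n : ℕ → ℕ} (N : Net L n)

/-- Output of layer `k` (entrywise ReLU applied); layer `0` is the input itself. -/
def hid (x : Input n) : (k : ℕ) → Fin (n k) → ℝ
  | 0 => fun i => x i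
  | k + 1 => fun j => max ((N.W k).mulVec (hid x k) j + N.b k j) 0

/-- The ReLU arguments `A(x)`: pre-activation of neuron `j` in layer `k+1`. -/
def preact (x : Input n) (k : ℕ) (j : Fin (n (k+1))) : ℝ :=
  (N.W k).mulVec (N.hid x k) j + N.b k j

/-- The hyperplane pattern `H(x) = sign.(A(x))`. -/
def Hpat (x : Input n) (k : ℕ) (j : Fin (n (k+1))) : ℝ :=
  Real.sign (N.preact x k j)

/-- Subjective hidden layers: activations frozen to the pattern `s`. -/
def shid (s : Pat n) (x : Input n) : (k : ℕ) → Fin (n k) → ℝ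
  | 0 => fun i => x i
  | k + 1 => fun j => s k j * ((N.W k).mulVec (shid s x k) j + N.b k j)

/-- The subjective ReLU arguments `Ã_s(x)`. -/
def spreact (s : Pat n) (x : Input n) (k : ℕ) (j : Fin (n (k+1))) : ℝ :=
  (N.W k).mulVec (N.shid s x k) j + N.b k j

/-- The subjective hyperplane pattern `H̃_s(x) = sign.(Ã_s(x))`. -/
def sHpat (s : Pat n) (x : Input n) (k : ℕ) (j : Fin (n (k+1))) : ℝ :=
  Real.sign (N.spreact s x k j)

/-- `S^C(x)`: activation patterns compatible with the hyperplane pattern `H(x)`. -/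
def SC (x : Input n) : Set (Pat n) :=
  {s | IsPattern L s ∧ PatCompatible L (N.Hpat x) s}

/-- `S̃^C(x)`: activation patterns compatible with their own induced subjective
hyperplane pattern `H̃_s(x)`. -/
def SCtilde (x : Input n) : Set (Pat n) :=
  {s | IsPattern L s ∧ PatCompatible L (N.sHpat s x) s}

/-- `C(x)`: critical indices, i.e. neurons whose hyperplane pattern is non-constant in
every neighbourhood of `x`. -/
def Critical (x : Input n) (p : Idx n) : Prop :=
  p.1 < L ∧ ∀ ε > 0, ∃ y z : Input n, dist y x < ε ∧ dist z x < ε ∧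
    N.Hpat y p.1 p.2 ≠ N.Hpat z p.1 p.2

/-- `C̃_s(x)`: subjective critical indices. -/
def sCritical (s : Pat n) (x : Input n) (p : Idx n) : Prop :=
  p.1 < L ∧ ∀ ε > 0, ∃ y z : Input n, dist y x < ε ∧ dist z x < ε ∧
    N.sHpat s y p.1 p.2 ≠ N.sHpat s z p.1 p.2

/-- The critical kernel `Ker^C(x)`. -/
def KerC (x : Input n) : Set (Input n) :=
  {v | ∃ ε > 0, ∀ t : ℝ, |t| < ε → ∀ p : Idx n, p.1 < L →
    N.Hpat (x + t • v) p.1 p.2 = N.Hpat x p.1 p.2}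

/-- The subjective critical kernel `K̃er^C_s(x)`. -/
def sKerC (s : Pat n) (x : Input n) : Set (Input n) :=
  {v | ∃ ε > 0, ∀ t : ℝ, |t| < ε → ∀ p : Idx n, p.1 < L →
    N.sHpat s (x + t • v) p.1 p.2 = N.sHpat s x p.1 p.2}

/-- Critical degrees of freedom `df^C(x) = dim Ker^C(x)`. -/
def dfC (x : Input n) : ℕ :=
  Module.finrank ℝ (Submodule.span ℝ (N.KerC x))

/-- `x` is a vertex iff `df^C(x) = 0`. -/
def IsVertex (x : Input n) : Prop := N.dfC x = 0

/-- The matrix `W_{k+1} diag(s_k) W_k ⋯ diag(s_1) W_1`. -/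
def sMat (s : Pat n) : (k : ℕ) → Matrix (Fin (n (k+1))) (Fin (n 0)) ℝ
  | 0 => N.W 0
  | k + 1 => N.W (k+1) * Matrix.diagonal (s k) * sMat s k

/-- The normal vector `ṽ_{s,l,j}` (transpose of the `j`-th row of
`W_l diag(s_{l-1}) ⋯ diag(s_1) W_1`). -/
def nvec (s : Pat n) (p : Idx n) : Input n :=
  WithLp.toLp 2 (fun i => N.sMat s p.1 p.2 i)

/-- The oriented normal vector `ũ_{s,l,j}`. -/
def onvec (s : Pat n) (p : Idx n) : Input n :=
  if s p.1 p.2 = 1 then N.nvec s p else -N.nvec s p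

/-- The gradient `∇_s = (W_{L+1} diag(s_L) ⋯ diag(s_1) W_1)ᵀ ∈ ℝ^{n_0}`. -/
def grad (h1 : n (L+1) = 1) (s : Pat n) : Input n :=
  N.nvec s ⟨L, Fin.cast h1.symm 0⟩

/-- The (real-valued) network function `f`. -/
def fnet (h1 : n (L+1) = 1) (x : Input n) : ℝ :=
  N.preact x L (Fin.cast h1.symm 0)

/-- The subjective network function `f̃_s`. -/
def sfnet (h1 : n (L+1) = 1) (s : Pat n) (x : Input n) : ℝ :=
  N.spreact s x L (Fin.cast h1.symm 0)

/-- The feasible directions `D̃_s(x)`. -/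
def Dfeas (s : Pat n) (x : Input n) : Set (Input n) :=
  {v | ∃ ε > 0, s ∈ N.SC (x + ε • v)}

/-- `x` is a regular point: for every compatible activation pattern `s ∈ S^C(x)`, the
normal vectors at the subjective critical indices are linearly independent. -/
def RegularPoint (x : Input n) : Prop :=
  ∀ s ∈ N.SC x, LinearIndependent ℝ
    (fun p : {p : Idx n // N.sCritical s x p} => N.nvec s p.1)

/-- The network is regular if every point is a regular point. -/
def Regular : Prop := ∀ x : Input n, N.RegularPoint x

/-- `w` is the feasible axis `ã_{x,s,l,j}` at `x` for the activation pattern `s` and the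
critical index `p = (l,j)`: it pairs to `1` with the oriented normal vector of `p` and
to `0` with the oriented normal vectors of all other critical indices of `x`. -/
def IsAxis (x : Input n) (s : Pat n) (p : Idx n) (w : Input n) : Prop :=
  ∀ q : Idx n, N.Critical x q → ⟪w, N.onvec s q⟫ = if p = q then 1 else 0

/-- The region separating axes `𝒜(x)`. -/
def RegionSepAxes (x : Input n) : Set (Input n) :=
  {w | ∃ s ∈ N.SC x, ∃ p : Idx n, N.Critical x p ∧ N.IsAxis x s p w}

end Net

namespace Net

variable {L : ℕ} {n : ℕ → ℕ} (N : Net L n)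

/-! ### Auxiliary lemmas -/

/-- The matrix `diag(s_k) W_k ⋯ diag(s_1) W_1` (identity for `k = 0`). -/
def pMat (s : Pat n) : (k : ℕ) → Matrix (Fin (n k)) (Fin (n 0)) ℝ
  | 0 => 1
  | k + 1 => Matrix.diagonal (s k) * N.W k * pMat s k

lemma shid_add (s : Pat n) (x v : Input n) :
    ∀ k, N.shid s (x + v) k = N.shid s x k + (N.pMat s k).mulVec v
  | 0 => by
    funext i
    simp only [shid, pMat, Matrix.one_mulVec, Pi.add_apply]
    exact PiLp.add_apply _ x v i
  | k + 1 => by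
    funext j
    simp only [shid, shid_add s x v k, Matrix.mulVec_add, Pi.add_apply,
      ← Matrix.mulVec_mulVec]
    have hd : ∀ w : Fin (n (k+1)) → ℝ,
        (Matrix.diagonal (s k)).mulVec w j = s k j * w j := by
      intro w
      simp [Matrix.mulVec, Matrix.diagonal, dotProduct,
        Finset.sum_ite_eq, Finset.mem_univ]
    rw [pMat]
    simp only [← Matrix.mulVec_mulVec]
    rw [hd]
    ring

lemma sMat_eq_pMat (s : Pat n) : ∀ k, N.sMat s k = N.W k * N.pMat s k
  | 0 => by simp [sMat, pMat]
  | k + 1 => by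
    rw [sMat, sMat_eq_pMat s k, pMat]
    simp only [Matrix.mul_assoc]

lemma spreact_add (s : Pat n) (x v : Input n) (k : ℕ) (j : Fin (n (k+1))) :
    N.spreact s (x + v) k j = N.spreact s x k j + (N.sMat s k).mulVec v j := by
  simp only [spreact, N.shid_add s x v k, Matrix.mulVec_add, Pi.add_apply,
    N.sMat_eq_pMat, ← Matrix.mulVec_mulVec]
  ring

lemma inner_nvec (s : Pat n) (p : Idx n) (v : Input n) :
    ⟪N.nvec s p, v⟫ = (N.sMat s p.1).mulVec v p.2 := by
  simp [nvec, PiLp.inner_apply, RCLike.inner_apply, conj_trivial,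
    Matrix.mulVec, dotProduct]
  exact Finset.sum_congr rfl fun _ _ => mul_comm _ _

lemma spreact_eq_inner (s : Pat n) (x w : Input n) (k : ℕ) (j : Fin (n (k+1))) :
    N.spreact s w k j = N.spreact s x k j + ⟪N.nvec s ⟨k, j⟩, w - x⟫ := by
  conv_lhs => rw [show w = x + (w - x) by abel]
  rw [N.spreact_add, N.inner_nvec]

/-- Compatibility with the hyperplane pattern below layer `k` forces the subjective
hidden layers to agree with the true ones. -/
lemma shid_eq_hid (s : Pat n) (y : Input n) :
    ∀ k : ℕ, (∀ m < k, ∀ i, s m i = 0 ∨ s m i = 1) →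
    (∀ m < k, ∀ i, Real.sign (N.preact y m i) * (s m i - 1/2) ≥ 0) →
    N.shid s y k = N.hid y k
  | 0, _, _ => rfl
  | k + 1, hp, hc => by
    funext j
    have ih := shid_eq_hid s y k
      (fun m hm => hp m (hm.trans (Nat.lt_succ_self k)))
      (fun m hm => hc m (hm.trans (Nat.lt_succ_self k)))
    show s k j * ((N.W k).mulVec (N.shid s y k) j + N.b k j)
        = max ((N.W k).mulVec (N.hid y k) j + N.b k j) 0
    rw [ih]
    have hcj := hc k (Nat.lt_succ_self k) j
    have hpj := hp k (Nat.lt_succ_self k) j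
    have hpre : N.preact y k j = (N.W k).mulVec (N.hid y k) j + N.b k j := rfl
    rw [hpre] at hcj
    set a := (N.W k).mulVec (N.hid y k) j + N.b k j with ha
    rcases lt_trichotomy a 0 with h | h | h
    · rw [Real.sign_of_neg h] at hcj
      have hs0 : s k j = 0 := by
        rcases hpj with h0 | h1
        · exact h0
        · rw [h1] at hcj; linarith
      rw [hs0, max_eq_right h.le, zero_mul]
    · rw [h, mul_zero]; simp
    · rw [Real.sign_of_pos h] at hcj
      have hs1 : s k j = 1 := by
        rcases hpj with h0 | h1
        · rw [h0] at hcj; linarith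
        · exact h1
      rw [hs1, one_mul, max_eq_left h.le]

lemma spreact_eq_preact (s : Pat n) (y : Input n) (k : ℕ) (hk : k ≤ L)
    (hs : s ∈ N.SC y) (j : Fin (n (k+1))) :
    N.spreact s y k j = N.preact y k j := by
  have h := N.shid_eq_hid s y k
    (fun m hm i => hs.1 m (lt_of_lt_of_le hm hk) i)
    (fun m hm i => hs.2 m (lt_of_lt_of_le hm hk) i)
  simp only [spreact, preact, h]

lemma continuous_hid : ∀ k, ∀ i : Fin (n k), Continuous fun x : Input n => N.hid x k i
  | 0, i => by
    simp only [hid]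
    exact (EuclideanSpace.proj (𝕜 := ℝ) i).continuous
  | k + 1, j => by
    simp only [hid, Matrix.mulVec, dotProduct]
    exact ((continuous_finset_sum _ fun r _ =>
      continuous_const.mul (continuous_hid k r)).add continuous_const).max
      continuous_const

lemma continuous_preact (k : ℕ) (j : Fin (n (k+1))) :
    Continuous fun x : Input n => N.preact x k j := by
  simp only [preact, Matrix.mulVec, dotProduct]
  exact (continuous_finset_sum _ fun r _ =>
    continuous_const.mul (N.continuous_hid k r)).add continuous_const

lemma sign_add_of_abs_lt {a b : ℝ} (h : |b| < |a|) :
    Real.sign (a + b) = Real.sign a := by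
  rcases lt_trichotomy a 0 with ha | ha | ha
  · rw [abs_of_neg ha] at h
    have hb := le_abs_self b
    rw [Real.sign_of_neg ha, Real.sign_of_neg (by linarith)]
  · exfalso
    rw [ha, abs_zero] at h
    exact absurd h (abs_nonneg b).not_gt
  · rw [abs_of_pos ha] at h
    have hb := neg_abs_le b
    rw [Real.sign_of_pos ha, Real.sign_of_pos (by linarith)]

lemma sCritical_iff (s : Pat n) (x : Input n) (p : Idx n) :
    N.sCritical s x p ↔ p.1 < L ∧ N.spreact s x p.1 p.2 = 0 ∧ N.nvec s p ≠ 0 := by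
  obtain ⟨k, j⟩ := p
  constructor
  · rintro ⟨hk, h⟩
    have hzero : N.spreact s x k j = 0 := by
      by_contra h0
      set a := N.spreact s x k j
      set c := ‖N.nvec s ⟨k, j⟩‖
      have hε : (0:ℝ) < |a| / (c + 1) := by positivity
      obtain ⟨y, z, hy, hz, hne⟩ := h _ hε
      apply hne
      have key : ∀ w : Input n, dist w x < |a| / (c + 1) →
          N.sHpat s w k j = Real.sign a := by
        intro w hw
        have hb : |⟪N.nvec s ⟨k, j⟩, w - x⟫| < |a| := by
          have h1 := abs_real_inner_le_norm (N.nvec s ⟨k, j⟩) (w - x)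
          have h2 : ‖w - x‖ = dist w x := (dist_eq_norm w x).symm
          have hc : (0:ℝ) ≤ c := norm_nonneg _
          have h5 : c * dist w x ≤ c * (|a| / (c + 1)) :=
            mul_le_mul_of_nonneg_left hw.le hc
          have h6 : c * (|a| / (c + 1)) < |a| := by
            rw [← mul_div_assoc, div_lt_iff₀ (by positivity : (0:ℝ) < c + 1)]
            nlinarith [abs_pos.mpr h0]
          calc |⟪N.nvec s ⟨k, j⟩, w - x⟫| ≤ c * ‖w - x‖ := h1
            _ = c * dist w x := by rw [h2]
            _ ≤ c * (|a| / (c + 1)) := h5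
            _ < |a| := h6
        show Real.sign (N.spreact s w k j) = Real.sign a
        rw [N.spreact_eq_inner s x w k j]
        exact sign_add_of_abs_lt hb
      rw [key y hy, key z hz]
    refine ⟨hk, hzero, ?_⟩
    intro hv
    obtain ⟨y, z, hy, hz, hne⟩ := h 1 one_pos
    apply hne
    have key : ∀ w : Input n, N.sHpat s w k j = 0 := by
      intro w
      show Real.sign (N.spreact s w k j) = 0
      rw [N.spreact_eq_inner s x w k j, hzero, hv, inner_zero_left, add_zero,
        Real.sign_zero]
    rw [key y, key z]
  · rintro ⟨hk, h0, hv⟩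
    refine ⟨hk, fun ε hε => ?_⟩
    set v := N.nvec s ⟨k, j⟩ with hvdef
    have hvn : (0:ℝ) < ‖v‖ := norm_pos_iff.mpr hv
    set t := ε / (2 * (‖v‖ + 1)) with htdef
    have ht : 0 < t := by positivity
    refine ⟨x + t • v, x, ?_, by simpa using hε, ?_⟩
    · rw [dist_eq_norm, add_sub_cancel_left, norm_smul, Real.norm_eq_abs,
        abs_of_pos ht]
      rw [htdef]
      rw [div_mul_eq_mul_div, div_lt_iff₀ (by positivity)]
      nlinarith
    · have h1 : N.sHpat s (x + t • v) k j = 1 := by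
        show Real.sign (N.spreact s (x + t • v) k j) = 1
        rw [N.spreact_eq_inner s x (x + t • v) k j, h0, add_sub_cancel_left,
          real_inner_smul_right, real_inner_self_eq_norm_sq]
        exact Real.sign_of_pos (by positivity)
      have h2 : N.sHpat s x k j = 0 := by
        show Real.sign (N.spreact s x k j) = 0
        rw [h0, Real.sign_zero]
      rw [h1, h2]; norm_num

lemma eventually_sign_eq (k : ℕ) (j : Fin (n (k+1))) (x : Input n)
    (h : N.preact x k j ≠ 0) :
    ∀ᶠ y in 𝓝 x, Real.sign (N.preact y k j) = Real.sign (N.preact x k j) := by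
  rcases h.lt_or_gt with hneg | hpos
  · have hev : ∀ᶠ y in 𝓝 x, N.preact y k j < 0 :=
      (isOpen_lt (N.continuous_preact k j) continuous_const).mem_nhds hneg
    exact hev.mono fun y hy => by rw [Real.sign_of_neg hy, Real.sign_of_neg hneg]
  · have hev : ∀ᶠ y in 𝓝 x, 0 < N.preact y k j :=
      (isOpen_lt continuous_const (N.continuous_preact k j)).mem_nhds hpos
    exact hev.mono fun y hy => by rw [Real.sign_of_pos hy, Real.sign_of_pos hpos]

lemma preact_eq_zero_of_critical {x : Input n} {p : Idx n} (h : N.Critical x p) :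
    N.preact x p.1 p.2 = 0 := by
  obtain ⟨k, j⟩ := p
  by_contra h0
  obtain ⟨ε, hε, hball⟩ := Metric.eventually_nhds_iff.mp (N.eventually_sign_eq k j x h0)
  obtain ⟨y, z, hy, hz, hne⟩ := h.2 ε hε
  exact hne ((hball hy).trans (hball hz).symm)

/-- The finite set of neuron indices of the hidden layers. -/
def idxT (L : ℕ) (n : ℕ → ℕ) : Finset (Idx n) :=
  (Finset.range L).sigma fun _ => Finset.univ

lemma mem_idxT {p : Idx n} : p ∈ idxT L n ↔ p.1 < L := by
  simp [idxT, Finset.mem_sigma]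

lemma eventually_SC_subset (x : Input n) :
    ∀ᶠ y in 𝓝 x, ∀ s', s' ∈ N.SC y → s' ∈ N.SC x := by
  have H : ∀ᶠ y in 𝓝 x, ∀ p ∈ (idxT L n : Set (Idx n)),
      (N.preact x p.1 p.2 ≠ 0 → N.Hpat y p.1 p.2 = N.Hpat x p.1 p.2) := by
    rw [Filter.eventually_all_finite (idxT L n).finite_toSet]
    intro p _
    by_cases h0 : N.preact x p.1 p.2 = 0
    · exact Filter.Eventually.of_forall fun y hne => absurd h0 hne
    · exact (N.eventually_sign_eq p.1 p.2 x h0).mono fun y hy _ => hy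
  refine H.mono fun y hy s' hs' => ⟨hs'.1, fun k hk j => ?_⟩
  by_cases h0 : N.preact x k j = 0
  · have : N.Hpat x k j = 0 := by
      show Real.sign (N.preact x k j) = 0
      rw [h0, Real.sign_zero]
    rw [this, zero_mul]
  · rw [← hy ⟨k, j⟩ (mem_idxT.mpr hk) h0]
    exact hs'.2 k hk j

/-- The canonical activation pattern at a point. -/
def canon (x : Input n) : Pat n := fun k j => if 0 < N.preact x k j then 1 else 0

lemma canon_mem_SC (x : Input n) : N.canon x ∈ N.SC x := by
  constructor
  · intro k _ j
    by_cases h : 0 < N.preact x k j <;> simp [canon, h]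
  · intro k _ j
    show Real.sign (N.preact x k j) * (N.canon x k j - 1/2) ≥ 0
    rcases lt_trichotomy (N.preact x k j) 0 with h | h | h
    · rw [Real.sign_of_neg h]
      simp only [canon, if_neg (not_lt.mpr h.le)]
      norm_num
    · rw [h, Real.sign_zero, zero_mul]
    · rw [Real.sign_of_pos h]
      simp only [canon, if_pos h]
      norm_num

lemma sMat_congr (s s' : Pat n) :
    ∀ k, (∀ m < k, s m = s' m) → N.sMat s k = N.sMat s' k
  | 0, _ => rfl
  | k + 1, h => by
    rw [sMat, sMat, h k (Nat.lt_succ_self k),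
      sMat_congr s s' k fun m hm => h m (hm.trans (Nat.lt_succ_self k))]

/-- Flip the activation pattern at a single neuron. -/
def flipPat (s : Pat n) (m : ℕ) (i : Fin (n (m+1))) (c : ℝ) : Pat n :=
  Function.update s m (Function.update (s m) i c)

lemma flipPat_ne (s : Pat n) (m : ℕ) (i : Fin (n (m+1))) (c : ℝ) {k : ℕ}
    (h : k ≠ m) : flipPat s m i c k = s k :=
  Function.update_of_ne h _ _

lemma flipPat_same (s : Pat n) (m : ℕ) (i : Fin (n (m+1))) (c : ℝ) :
    flipPat s m i c m = Function.update (s m) i c :=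
  Function.update_self _ _ _

lemma sMat_succ_apply (s : Pat n) (k : ℕ) (j : Fin (n (k+2))) (i0 : Fin (n 0)) :
    N.sMat s (k+1) j i0 = ∑ r, N.W (k+1) j r * s k r * N.sMat s k r i0 := by
  show (N.W (k+1) * Matrix.diagonal (s k) * N.sMat s k) j i0 = _
  rw [Matrix.mul_apply]
  refine Finset.sum_congr rfl fun r _ => ?_
  rw [Matrix.mul_diagonal]

lemma nvec_flip (s : Pat n) (m : ℕ) (i : Fin (n (m+1))) (c : ℝ) :
    ∀ k, m < k → ∀ j : Fin (n (k+1)),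
      ∃ α : ℝ, N.nvec (flipPat s m i c) ⟨k, j⟩ = N.nvec s ⟨k, j⟩ + α • N.nvec s ⟨m, i⟩ := by
  intro k
  induction k with
  | zero => omega
  | succ k ih =>
    intro hmk j
    rcases Nat.lt_succ_iff_lt_or_eq.mp hmk with hlt | heq
    · -- inductive step: m < k
      choose α hα using ih hlt
      refine ⟨∑ r, N.W (k+1) j r * s k r * α r, ?_⟩
      ext i0
      have hent : ∀ r, N.sMat (flipPat s m i c) k r i0
          = N.sMat s k r i0 + α r * N.sMat s m i i0 := by
        intro r
        have := congrArg (fun v => v i0) (hα r)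
        simpa [nvec, PiLp.add_apply, PiLp.smul_apply, smul_eq_mul] using this
      have hflipk : flipPat s m i c k = s k := flipPat_ne s m i c (by omega)
      simp only [nvec, PiLp.add_apply, PiLp.smul_apply, smul_eq_mul]
      rw [N.sMat_succ_apply, N.sMat_succ_apply]
      simp only [hflipk, hent]
      rw [Finset.sum_mul]
      rw [← Finset.sum_add_distrib]
      refine Finset.sum_congr rfl fun r _ => ?_
      ring
    · -- base case: k = m
      subst heq
      refine ⟨N.W (m+1) j i * (c - s m i), ?_⟩
      ext i0
      have hlow : N.sMat (flipPat s m i c) m = N.sMat s m :=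
        N.sMat_congr _ s m fun m' hm' => flipPat_ne s m i c (by omega)
      simp only [nvec, PiLp.add_apply, PiLp.smul_apply, smul_eq_mul]
      rw [N.sMat_succ_apply, N.sMat_succ_apply]
      simp only [hlow, flipPat_same s m i c]
      have hupd : (fun r => N.W (m+1) j r * Function.update (s m) i c r * N.sMat s m r i0)
          = Function.update (fun r => N.W (m+1) j r * s m r * N.sMat s m r i0) i
            (N.W (m+1) j i * c * N.sMat s m i i0) := by
        funext r
        by_cases hr : r = i
        · subst hr
          rw [Function.update_self, Function.update_self]
        · rw [Function.update_of_ne hr, Function.update_of_ne hr]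
      rw [hupd, Finset.sum_update_of_mem (Finset.mem_univ i),
        Finset.sum_eq_add_sum_sdiff_singleton_of_mem (Finset.mem_univ i)
          (fun r => N.W (m+1) j r * s m r * N.sMat s m r i0)]
      ring

/-- The set of neurons below layer `k` where two patterns differ. -/
def diffset (s s' : Pat n) (k : ℕ) : Finset (Idx n) :=
  ((Finset.range k).sigma fun _ => Finset.univ).filter fun p => s p.1 p.2 ≠ s' p.1 p.2

lemma transfer (x : Input n) (hreg : N.RegularPoint x) {k : ℕ} (hk : k < L)
    (j : Fin (n (k+1))) (h0 : N.preact x k j = 0) :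
    ∀ d : ℕ, ∀ s s', s ∈ N.SC x → s' ∈ N.SC x → (Net.diffset s s' k).card ≤ d →
      N.nvec s ⟨k, j⟩ = 0 → N.nvec s' ⟨k, j⟩ = 0 := by
  intro d
  induction d with
  | zero =>
    intro s s' _ _ hcard hz
    have hempty : Net.diffset s s' k = ∅ := Finset.card_eq_zero.mp (Nat.le_zero.mp hcard)
    have hagree : ∀ m < k, s m = s' m := by
      intro m hm
      funext i
      by_contra hne
      have : (⟨m, i⟩ : Idx n) ∈ Net.diffset s s' k := by
        simp [diffset, Finset.mem_filter, Finset.mem_sigma, Finset.mem_range, hm, hne]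
      rw [hempty] at this
      exact absurd this (Finset.notMem_empty _)
    have : N.sMat s' k = N.sMat s k := N.sMat_congr s' s k fun m hm => (hagree m hm).symm
    unfold nvec at hz ⊢
    rw [this]
    exact hz
  | succ d ih =>
    intro s s' hsx hs'x hcard hz
    by_cases hempty : Net.diffset s s' k = ∅
    · exact ih s s' hsx hs'x (by rw [hempty]; simp) hz
    · obtain ⟨p0, hp0⟩ := Finset.nonempty_iff_ne_empty.mpr hempty
      obtain ⟨m, i⟩ := p0
      rw [diffset, Finset.mem_filter, Finset.mem_sigma] at hp0
      have hm : m < k := Finset.mem_range.mp hp0.1.1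
      have hdiff : s m i ≠ s' m i := hp0.2
      have hmL : m < L := hm.trans hk
      -- the preactivation at the flipped neuron vanishes
      have h0mi : N.preact x m i = 0 := by
        have hcs := hsx.2 m hmL i
        have hcs' := hs'x.2 m hmL i
        have hHdef : N.Hpat x m i = Real.sign (N.preact x m i) := rfl
        rcases lt_trichotomy (N.preact x m i) 0 with h | h | h
        · exfalso
          rw [hHdef, Real.sign_of_neg h] at hcs hcs'
          have h1 : s m i = 0 := by
            rcases hsx.1 m hmL i with h' | h'
            · exact h'
            · rw [h'] at hcs; linarith
          have h2 : s' m i = 0 := by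
            rcases hs'x.1 m hmL i with h' | h'
            · exact h'
            · rw [h'] at hcs'; linarith
          exact hdiff (h1.trans h2.symm)
        · exact h
        · exfalso
          rw [hHdef, Real.sign_of_pos h] at hcs hcs'
          have h1 : s m i = 1 := by
            rcases hsx.1 m hmL i with h' | h'
            · rw [h'] at hcs; linarith
            · exact h'
          have h2 : s' m i = 1 := by
            rcases hs'x.1 m hmL i with h' | h'
            · rw [h'] at hcs'; linarith
            · exact h'
          exact hdiff (h1.trans h2.symm)
      set s'' := flipPat s m i (s' m i) with hs''def
      have hs''x : s'' ∈ N.SC x := by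
        constructor
        · intro k' hk' j'
          by_cases hk'm : k' = m
          · subst hk'm
            rw [hs''def, flipPat_same]
            by_cases hj' : j' = i
            · subst hj'
              rw [Function.update_self]
              exact hs'x.1 k' hk' _
            · rw [Function.update_of_ne hj']
              exact hsx.1 k' hk' j'
          · rw [hs''def, flipPat_ne s m i _ hk'm]
            exact hsx.1 k' hk' j'
        · intro k' hk' j'
          by_cases hk'm : k' = m
          · subst hk'm
            by_cases hj' : j' = i
            · subst hj'
              have : N.Hpat x k' j' = 0 := by
                show Real.sign (N.preact x k' j') = 0
                rw [h0mi, Real.sign_zero]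
              rw [this, zero_mul]
            · rw [hs''def, flipPat_same, Function.update_of_ne hj']
              exact hsx.2 k' hk' j'
          · rw [hs''def, flipPat_ne s m i _ hk'm]
            exact hsx.2 k' hk' j'
      -- the flipped pattern still has vanishing normal vector at (k, j)
      obtain ⟨α, hα⟩ := N.nvec_flip s m i (s' m i) k hm j
      have hlowmi : N.nvec s'' ⟨m, i⟩ = N.nvec s ⟨m, i⟩ := by
        have : N.sMat s'' m = N.sMat s m :=
          N.sMat_congr s'' s m fun m' hm' => flipPat_ne s m i _ (by omega)
        unfold nvec
        rw [this]
      have hz'' : N.nvec s'' ⟨k, j⟩ = 0 := by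
        by_contra hne
        rw [hz, zero_add] at hα
        have hαne : α ≠ 0 := by
          rintro rfl
          rw [zero_smul] at hα
          exact hne hα
        have hvmi : N.nvec s ⟨m, i⟩ ≠ 0 := by
          rintro hv0
          rw [hv0, smul_zero] at hα
          exact hne hα
        have hc1 : N.sCritical s'' x ⟨k, j⟩ := by
          rw [N.sCritical_iff]
          exact ⟨hk, by rw [N.spreact_eq_preact s'' x k hk.le hs''x]; exact h0, hne⟩
        have hc2 : N.sCritical s'' x ⟨m, i⟩ := by
          rw [N.sCritical_iff]
          refine ⟨hmL, by rw [N.spreact_eq_preact s'' x m hmL.le hs''x]; exact h0mi, ?_⟩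
          rw [hlowmi]
          exact hvmi
        have hli := hreg s'' hs''x
        set q1 : {p : Idx n // N.sCritical s'' x p} := ⟨⟨k, j⟩, hc1⟩
        set q2 : {p : Idx n // N.sCritical s'' x p} := ⟨⟨m, i⟩, hc2⟩
        have hq12 : q1 ≠ q2 := by
          intro h
          have := congrArg (fun q => (q : {p : Idx n // N.sCritical s'' x p}).1.1) h
          simp only [q1, q2] at this
          omega
        have hrel : ∑ q ∈ ({q1, q2} : Finset _),
            (fun q => if q = q1 then (1:ℝ) else -α) q • N.nvec s'' q.1 = 0 := by
          rw [Finset.sum_pair hq12]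
          simp only [if_pos rfl, if_neg (Ne.symm hq12)]
          show (1:ℝ) • N.nvec s'' ⟨k, j⟩ + (-α) • N.nvec s'' ⟨m, i⟩ = 0
          rw [hlowmi, one_smul, hα, neg_smul]
          abel
        have := linearIndependent_iff'.mp hli {q1, q2} _ hrel q1 (by simp)
        simp at this
      -- recurse
      have hsub : Net.diffset s'' s' k ⊆ (Net.diffset s s' k).erase ⟨m, i⟩ := by
        intro q hq
        obtain ⟨m', i'⟩ := q
        rw [diffset, Finset.mem_filter, Finset.mem_sigma] at hq
        have hm' : m' < k := Finset.mem_range.mp hq.1.1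
        have hd' : s'' m' i' ≠ s' m' i' := hq.2
        have hqne : (⟨m', i'⟩ : Idx n) ≠ ⟨m, i⟩ := by
          intro heq
          obtain ⟨h1, h2⟩ := Sigma.mk.inj_iff.mp heq
          subst h1
          have h3 : i' = i := eq_of_heq h2
          subst h3
          apply hd'
          rw [hs''def, flipPat_same, Function.update_self]
        have hseq : s'' m' i' = s m' i' := by
          by_cases hmm : m' = m
          · subst hmm
            have hii : i' ≠ i := fun h => hqne (by rw [h])
            rw [hs''def, flipPat_same, Function.update_of_ne hii]
          · rw [hs''def, flipPat_ne s m i _ hmm]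
        rw [Finset.mem_erase]
        refine ⟨hqne, ?_⟩
        rw [diffset, Finset.mem_filter, Finset.mem_sigma]
        exact ⟨⟨Finset.mem_range.mpr hm', Finset.mem_univ _⟩, by rw [← hseq]; exact hd'⟩
      have hmem : (⟨m, i⟩ : Idx n) ∈ Net.diffset s s' k := by
        rw [diffset, Finset.mem_filter, Finset.mem_sigma]
        exact ⟨⟨Finset.mem_range.mpr hm, Finset.mem_univ _⟩, hdiff⟩
      have hcard' : (Net.diffset s'' s' k).card ≤ d := by
        calc (Net.diffset s'' s' k).card ≤ ((Net.diffset s s' k).erase ⟨m, i⟩).card :=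
              Finset.card_le_card hsub
          _ = (Net.diffset s s' k).card - 1 := Finset.card_erase_of_mem hmem
          _ ≤ d := by omega
      exact ih s'' s' hs''x hs'x hcard' hz''

end Net

/-- Theorem 2: for every regular point `x`, the critical indices are
stable: `C(x) = C̃_s(x)` for all compatible `s ∈ S^C(x)`. -/
theorem statement11 {L : ℕ} {n : ℕ → ℕ} (N : Net L n) (x : Input n)
    (hreg : N.RegularPoint x) (s : Pat n) (hs : s ∈ N.SC x) :
    ∀ p : Idx n, N.Critical x p ↔ N.sCritical s x p := by
  rintro ⟨k, j⟩
  constructor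
  · -- C(x) ⊆ C̃ₛ(x)
    intro hcrit
    have hk : k < L := hcrit.1
    have h0 : N.preact x k j = 0 := N.preact_eq_zero_of_critical hcrit
    rw [N.sCritical_iff]
    refine ⟨hk, by rw [N.spreact_eq_preact s x k hk.le hs]; exact h0, ?_⟩
    intro hv
    obtain ⟨ε, hε, hball⟩ := Metric.eventually_nhds_iff.mp (N.eventually_SC_subset x)
    obtain ⟨y, z, hy, hz, hne⟩ := hcrit.2 ε hε
    apply hne
    have key : ∀ w : Input n, dist w x < ε → N.Hpat w k j = 0 := by
      intro w hw
      have hsw : N.canon w ∈ N.SC w := N.canon_mem_SC w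
      have hswx : N.canon w ∈ N.SC x := hball hw _ hsw
      have hnv : N.nvec (N.canon w) ⟨k, j⟩ = 0 :=
        N.transfer x hreg hk j h0 (Net.diffset s (N.canon w) k).card s (N.canon w)
          hs hswx le_rfl hv
      have hH : N.Hpat w k j = Real.sign (N.spreact (N.canon w) w k j) := by
        rw [N.spreact_eq_preact _ w k hk.le hsw]; rfl
      rw [hH, N.spreact_eq_inner _ x w k j, hnv,
        N.spreact_eq_preact _ x k hk.le hswx, h0, inner_zero_left, add_zero,
        Real.sign_zero]
    rw [key y hy, key z hz]
  · -- C̃ₛ(x) ⊆ C(x)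
    intro hscrit
    obtain ⟨hk, h0s, hv⟩ := (N.sCritical_iff s x ⟨k, j⟩).mp hscrit
    replace hk : k < L := hk
    have h0 : N.preact x k j = 0 := by
      rw [← N.spreact_eq_preact s x k hk.le hs]; exact h0s
    refine ⟨hk, fun ε hε => ?_⟩
    have hli := hreg s hs
    set P : {p : Idx n // N.sCritical s x p} := ⟨⟨k, j⟩, hscrit⟩ with hPdef
    set K : Submodule ℝ (Input n) :=
      Submodule.span ℝ ((fun q : {p : Idx n // N.sCritical s x p} => N.nvec s q.1) ''
        {q | q ≠ P}) with hKdef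
    have hnotmem : N.nvec s ⟨k, j⟩ ∉ K := by
      have := hli.notMem_span_image (s := {q | q ≠ P}) (x := P) (by simp)
      exact this
    obtain ⟨a, ha, u, hu, hdecomp⟩ := K.exists_add_mem_mem_orthogonal (N.nvec s ⟨k, j⟩)
    have hu0 : u ≠ 0 := by
      rintro rfl
      rw [add_zero] at hdecomp
      exact hnotmem (hdecomp ▸ ha)
    have hun : (0:ℝ) < ‖u‖ := norm_pos_iff.mpr hu0
    have hip : ⟪N.nvec s ⟨k, j⟩, u⟫ = ‖u‖ ^ 2 := by
      rw [hdecomp, inner_add_left, (Submodule.mem_orthogonal K u).mp hu a ha,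
        zero_add, real_inner_self_eq_norm_sq]
    set σ : ℝ := if s k j = 1 then 1 else -1 with hσdef
    set v : Input n := (σ / ‖u‖ ^ 2) • u with hvdef
    have hipv : ⟪N.nvec s ⟨k, j⟩, v⟫ = σ := by
      rw [hvdef, real_inner_smul_right, hip]
      field_simp
    have hothers : ∀ q : Idx n, N.sCritical s x q → q ≠ ⟨k, j⟩ →
        ⟪N.nvec s q, v⟫ = 0 := by
      intro q hq hqne
      have hmem : N.nvec s q ∈ K := by
        apply Submodule.subset_span
        exact ⟨⟨q, hq⟩, by simp [hPdef, Subtype.ext_iff, hqne], rfl⟩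
      rw [hvdef, real_inner_smul_right, (Submodule.mem_orthogonal K u).mp hu _ hmem,
        mul_zero]
    -- choose a small positive step size
    have hev : ∀ᶠ t : ℝ in 𝓝 0,
        (∀ p ∈ (Net.idxT L n : Set (Idx n)), N.spreact s x p.1 p.2 ≠ 0 →
          |t * ⟪N.nvec s p, v⟫| < |N.spreact s x p.1 p.2|) ∧
        |t| * ‖v‖ < ε := by
      refine Filter.Eventually.and ?_ ?_
      · rw [Filter.eventually_all_finite (Net.idxT L n).finite_toSet]
        intro p _
        by_cases h0p : N.spreact s x p.1 p.2 = 0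
        · exact Filter.Eventually.of_forall fun t ht => absurd h0p ht
        · have htend : Filter.Tendsto (fun t : ℝ => |t * ⟪N.nvec s p, v⟫|) (𝓝 0)
              (𝓝 0) := by
            have : Filter.Tendsto (fun t : ℝ => t * ⟪N.nvec s p, v⟫) (𝓝 0)
                (𝓝 (0 * ⟪N.nvec s p, v⟫)) :=
              (continuous_id.mul continuous_const).tendsto 0
            rw [zero_mul] at this
            simpa using this.abs
          exact (htend.eventually_lt_const (abs_pos.mpr h0p)).mono fun t ht _ => ht
      · have htend : Filter.Tendsto (fun t : ℝ => |t| * ‖v‖) (𝓝 0) (𝓝 0) := by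
          have : Filter.Tendsto (fun t : ℝ => |t| * ‖v‖) (𝓝 0) (𝓝 (|(0:ℝ)| * ‖v‖)) :=
            (continuous_abs.mul continuous_const).tendsto 0
          simpa using this
        exact htend.eventually_lt_const hε
    obtain ⟨δ, hδ, hδ'⟩ := Metric.eventually_nhds_iff.mp hev
    set t : ℝ := δ / 2 with htdef
    have ht : 0 < t := by positivity
    have htδ : dist t (0:ℝ) < δ := by
      rw [Real.dist_eq, sub_zero, abs_of_pos ht]
      rw [htdef]; linarith
    obtain ⟨hbound, hdist⟩ := hδ' htδ
    set y : Input n := x + t • v with hydef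
    have hdisty : dist y x < ε := by
      rw [hydef, dist_eq_norm, add_sub_cancel_left, norm_smul, Real.norm_eq_abs]
      exact hdist
    -- compatibility of s with the hyperplane pattern at y, layer by layer
    have hcompat : ∀ m, m ≤ L →
        ∀ m' < m, ∀ i', Real.sign (N.preact y m' i') * (s m' i' - 1/2) ≥ 0 := by
      intro m
      induction m with
      | zero => intro _ m' hm'; omega
      | succ m ihm =>
        intro hmL m' hm' i'
        rcases Nat.lt_succ_iff_lt_or_eq.mp hm' with hlt | heq
        · exact ihm (by omega) m' hlt i'
        · subst heq
          have hm'L : m' < L := by omega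
          have hsh : N.shid s y m' = N.hid y m' :=
            N.shid_eq_hid s y m'
              (fun m'' hm'' i'' => hs.1 m'' (by omega) i'')
              (fun m'' hm'' i'' => ihm (by omega) m'' hm'' i'')
          have hpre : N.preact y m' i'
              = N.spreact s x m' i' + t * ⟪N.nvec s ⟨m', i'⟩, v⟫ := by
            have h1 : N.preact y m' i' = N.spreact s y m' i' := by
              unfold Net.preact Net.spreact
              rw [hsh]
            rw [h1, N.spreact_eq_inner s x y m' i', hydef, add_sub_cancel_left,
              real_inner_smul_right]
          by_cases hz : N.spreact s x m' i' = 0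
          · by_cases hnv : N.nvec s ⟨m', i'⟩ = 0
            · rw [hpre, hz, hnv, inner_zero_left, mul_zero, add_zero,
                Real.sign_zero, zero_mul]
            · have hqcrit : N.sCritical s x ⟨m', i'⟩ :=
                (N.sCritical_iff s x ⟨m', i'⟩).mpr ⟨hm'L, hz, hnv⟩
              by_cases hq : (⟨m', i'⟩ : Idx n) = ⟨k, j⟩
              · obtain ⟨hmk, hij⟩ := Sigma.mk.inj_iff.mp hq
                subst hmk
                have hij' : i' = j := eq_of_heq hij
                subst hij'
                rw [hpre, hz, zero_add, hipv]
                rcases hs.1 m' hm'L i' with hsval | hsval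
                · have hσval : σ = -1 := by
                    rw [hσdef, if_neg (by rw [hsval]; norm_num)]
                  rw [hσval, hsval, Real.sign_of_neg (by nlinarith)]
                  norm_num
                · have hσval : σ = 1 := by rw [hσdef, if_pos hsval]
                  rw [hσval, hsval, Real.sign_of_pos (by nlinarith)]
                  norm_num
              · rw [hpre, hz, hothers ⟨m', i'⟩ hqcrit hq, mul_zero, add_zero,
                  Real.sign_zero, zero_mul]
          · have hb := hbound ⟨m', i'⟩ (Net.mem_idxT.mpr hm'L) hz
            have hsgn : Real.sign (N.preact y m' i')
                = Real.sign (N.spreact s x m' i') := by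
              rw [hpre]
              exact Net.sign_add_of_abs_lt hb
            rw [hsgn, N.spreact_eq_preact s x m' hm'L.le hs]
            exact hs.2 m' hm'L i'
    -- conclude
    refine ⟨y, x, hdisty, by simpa using hε, ?_⟩
    have hsh : N.shid s y k = N.hid y k :=
      N.shid_eq_hid s y k
        (fun m'' hm'' i'' => hs.1 m'' (by omega) i'')
        (fun m'' hm'' i'' => hcompat L le_rfl m'' (by omega) i'')
    have hHy : N.Hpat y k j = Real.sign (t * σ) := by
      show Real.sign (N.preact y k j) = _
      have h1 : N.preact y k j = N.spreact s y k j := by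
        unfold Net.preact Net.spreact
        rw [hsh]
      rw [h1, N.spreact_eq_inner s x y k j, hydef, add_sub_cancel_left,
        real_inner_smul_right, hipv, h0s, zero_add]
    have hHx : N.Hpat x k j = 0 := by
      show Real.sign (N.preact x k j) = 0
      rw [h0, Real.sign_zero]
    rw [hHy, hHx]
    rcases hs.1 k hk j with hsval | hsval
    · have hσval : σ = -1 := by rw [hσdef, if_neg (by rw [hsval]; norm_num)]
      rw [hσval, Real.sign_of_neg (by nlinarith)]
      norm_num
    · have hσval : σ = 1 := by rw [hσdef, if_pos hsval]
      rw [hσval, Real.sign_of_pos (by nlinarith)]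
      norm_num

end DRLP
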